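/- Let M be an image-finite Kripke model with ⌢ in the restorative similarity type Λ. Define S by subsumption in the Λ-language. Then S satisfies (Sim⌢): if S w v and v R t, then there exists s with w R s and S t s. -/

import Mathlib

inductive Op : Type
  | smile
  | frown
  | cons
  | det
  | incons
  | undet
  deriving DecidableEq

inductive Fm (K : Type) : Type
  | prop (k : K)
  | top
  | bot
  | and (a b : Fm K)
  | or (a b : Fm K)
  | smile (a : Fm K)
  | frown (a : Fm K)
  | cons (a : Fm K)
  | det (a : Fm K)
  | incons (a : Fm K)
  | undet (a : Fm K)

def Sat {W K : Type} (R : W → W → Prop) (P : K → W → Prop) : W → Fm K → Prop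
  | w, .prop k => P k w
  | _, .top => True
  | _, .bot => False
  | w, .and a b => Sat R P w a ∧ Sat R P w b
  | w, .or a b => Sat R P w a ∨ Sat R P w b
  | w, .smile a => ∃ v, R w v ∧ ¬ Sat R P v a
  | w, .frown a => ∀ v, R w v → ¬ Sat R P v a
  | w, .cons a => ¬ Sat R P w a ∨ ∀ v, R w v → Sat R P v a
  | w, .det a => Sat R P w a ∨ ∀ v, R w v → ¬ Sat R P v a
  | w, .incons a => Sat R P w a ∧ ∃ v, R w v ∧ ¬ Sat R P v a
  | w, .undet a => ¬ Sat R P w a ∧ ∃ v, R w v ∧ Sat R P v a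

/-- `InLang Λ φ` says that `φ` uses only modal operators from `Λ`. -/
def InLang {K : Type} (Λ : Set Op) : Fm K → Prop
  | .prop _ => True
  | .top => True
  | .bot => True
  | .and a b => InLang Λ a ∧ InLang Λ b
  | .or a b => InLang Λ a ∧ InLang Λ b
  | .smile a => Op.smile ∈ Λ ∧ InLang Λ a
  | .frown a => Op.frown ∈ Λ ∧ InLang Λ a
  | .cons a => Op.cons ∈ Λ ∧ InLang Λ a
  | .det a => Op.det ∈ Λ ∧ InLang Λ a
  | .incons a => Op.incons ∈ Λ ∧ InLang Λ a
  | .undet a => Op.undet ∈ Λ ∧ InLang Λ a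

def conj {K : Type} : List (Fm K) → Fm K
  | [] => .top
  | a :: l => .and a (conj l)

lemma sat_conj {W K : Type} (R : W → W → Prop) (P : K → W → Prop) (w : W) :
    ∀ l : List (Fm K), Sat R P w (conj l) ↔ ∀ φ ∈ l, Sat R P w φ
  | [] => by simp [conj, Sat]
  | a :: l => by simp [conj, Sat, sat_conj R P w l]

lemma inlang_conj {K : Type} (Λ : Set Op) :
    ∀ l : List (Fm K), (∀ φ ∈ l, InLang Λ φ) → InLang Λ (conj l)
  | [] => by simp [conj, InLang]
  | a :: l => by
      intro h
      simp only [conj, InLang]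
      exact ⟨h a (by simp), inlang_conj Λ l fun φ hφ => h φ (by simp [hφ])⟩

theorem stmt13 {W K : Type} (Λ : Set Op)
    (R : W → W → Prop) (P : K → W → Prop)
    (hfin : ∀ w : W, {v | R w v}.Finite)
    (hΛ : Op.frown ∈ Λ) :
    ∀ w v t : W,
      (∀ φ : Fm K, InLang Λ φ → Sat R P w φ → Sat R P v φ) → R v t →
      ∃ s, R w s ∧ (∀ φ : Fm K, InLang Λ φ → Sat R P t φ → Sat R P s φ) := by
  intro w v t hsub hvt
  by_contra hc
  push_neg at hc
  have h' : ∀ s : W, ∃ φ : Fm K, InLang Λ φ ∧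
      (R w s → Sat R P t φ ∧ ¬ Sat R P s φ) := by
    intro s
    by_cases hs : R w s
    · obtain ⟨φ, h1, h2, h3⟩ := hc s hs
      exact ⟨φ, h1, fun _ => ⟨h2, h3⟩⟩
    · exact ⟨.top, trivial, fun h => absurd h hs⟩
  choose F hF1 hF2 using h'
  set l := ((hfin w).toFinset.toList).map F with hl
  have hmem : ∀ s : W, R w s → F s ∈ l := by
    intro s hs
    exact List.mem_map_of_mem (f := F) (by simp [Set.Finite.mem_toFinset, hs])
  have hw : Sat R P w (.frown (conj l)) := by
    intro s hs hsat
    exact (hF2 s hs).2 ((sat_conj R P s l).1 hsat (F s) (hmem s hs))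
  have hinl : InLang Λ (Fm.frown (conj l)) := by
    refine ⟨hΛ, inlang_conj Λ l ?_⟩
    intro φ hφ
    simp only [hl, List.mem_map] at hφ
    obtain ⟨s, _, rfl⟩ := hφ
    exact hF1 s
  have hv := hsub _ hinl hw
  refine hv t hvt ((sat_conj R P t l).2 ?_)
  intro φ hφ
  simp only [hl, List.mem_map, Finset.mem_toList, Set.Finite.mem_toFinset] at hφ
  obtain ⟨s, hs, rfl⟩ := hφ
  exact (hF2 s hs).1
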